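/- Let C be a convex polyhedral cone in a finite-dimensional real vector space that contains no nonzero linear subspace, and let R₀ be a one-dimensional face (extremal ray) of C. If R₁,…,Rₘ are the one-dimensional faces of C adjacent to R₀ (i.e., those Rᵢ such that R₀+Rᵢ is a two-dimensional face of C), then the linear span of R₀, R₁, …, Rₘ equals the linear span of C. -/

import Mathlib

/-!
Lemma II.2.6 of Ewald: for a convex polyhedral cone `C` containing no nonzero linear
subspace and a one-dimensional face (extremal ray) `R₀` of `C`, the linear span of `R₀`
together with all extremal rays adjacent to `R₀` equals the linear span of `C`.
-/

open Module

variable {V : Type*} [AddCommGroup V] [Module ℝ V]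

/-- `C` is a convex polyhedral cone: the set of nonnegative combinations of finitely many
vectors. -/
def IsPolyhedralCone (C : Set V) : Prop :=
  ∃ s : Finset V, C = {x | ∃ c : V → ℝ, (∀ v, 0 ≤ c v) ∧ x = ∑ v ∈ s, c v • v}

/-- `F` is a subcone: contains `0`, closed under addition and nonnegative scaling. -/
def IsSubcone (F : Set V) : Prop :=
  0 ∈ F ∧ (∀ x ∈ F, ∀ y ∈ F, x + y ∈ F) ∧ ∀ t : ℝ, 0 ≤ t → ∀ x ∈ F, t • x ∈ F

/-- `F` is a face of the cone `C`: a subcone of `C` such that whenever `x + y ∈ F` with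
`x, y ∈ C`, one has `x, y ∈ F`. -/
def IsFaceOf (C F : Set V) : Prop :=
  IsSubcone F ∧ F ⊆ C ∧ ∀ x ∈ C, ∀ y ∈ C, x + y ∈ F → x ∈ F ∧ y ∈ F

/-- An extremal ray of `C`: a one-dimensional face. -/
def IsExtremalRayOf (C R : Set V) : Prop :=
  IsFaceOf C R ∧ Module.finrank ℝ (Submodule.span ℝ R) = 1

open Pointwise in
/-- Two distinct extremal rays `R`, `R'` of `C` are adjacent if `R + R'` is a face of `C`. -/
def AreAdjacent (C R R' : Set V) : Prop :=
  IsExtremalRayOf C R ∧ IsExtremalRayOf C R' ∧ R ≠ R' ∧ IsFaceOf C (R + R')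

/-! ### Auxiliary definitions and lemmas -/

def ConeSet (s : Finset V) : Set V :=
  {x | ∃ c : V → ℝ, (∀ v, 0 ≤ c v) ∧ x = ∑ v ∈ s, c v • v}

lemma isPolyhedralCone_iff {C : Set V} : IsPolyhedralCone C ↔ ∃ s : Finset V, C = ConeSet s :=
  Iff.rfl

lemma coneSet_subcone (s : Finset V) : IsSubcone (ConeSet s) := by
  refine ⟨⟨fun _ => 0, fun v => le_refl 0, by simp⟩, ?_, ?_⟩
  · rintro x ⟨c, hc, rfl⟩ y ⟨d, hd, rfl⟩
    exact ⟨c + d, fun v => add_nonneg (hc v) (hd v), by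
      simp [add_smul, Finset.sum_add_distrib]⟩
  · rintro t ht x ⟨c, hc, rfl⟩
    exact ⟨t • c, fun v => mul_nonneg ht (hc v), by
      simp [Finset.smul_sum, smul_smul]⟩

lemma mem_coneSet {s : Finset V} {v : V} (hv : v ∈ s) : v ∈ ConeSet s := by
  classical
  refine ⟨fun u => if u = v then 1 else 0, fun u => by positivity, ?_⟩
  rw [Finset.sum_eq_single v]
  · simp
  · intro b _ hb; simp [hb]
  · intro h; exact absurd hv h

lemma IsSubcone.sum_mem {F : Set V} (hF : IsSubcone F) {ι : Type*} (t : Finset ι) (g : ι → V)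
    (h : ∀ i ∈ t, g i ∈ F) : ∑ i ∈ t, g i ∈ F :=
  Finset.sum_induction g (· ∈ F) (fun a b ha hb => hF.2.1 a ha b hb) hF.1 h

lemma coneSet_subset_of_subcone {F : Set V} (hF : IsSubcone F) {s : Finset V}
    (h : (s : Set V) ⊆ F) : ConeSet s ⊆ F := by
  rintro x ⟨c, hc, rfl⟩
  exact hF.sum_mem _ _ fun v hv => hF.2.2 _ (hc v) _ (h hv)

lemma coneSet_mono {s t : Finset V} (h : t ⊆ s) : ConeSet t ⊆ ConeSet s := by
  classical
  rintro x ⟨c, hc, rfl⟩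
  refine ⟨fun v => if v ∈ t then c v else 0, fun v => by dsimp; split <;> [exact hc v; rfl], ?_⟩
  rw [← Finset.sum_subset h (fun x _ hxt => by simp [hxt])]
  exact Finset.sum_congr rfl fun v hv => by simp [hv]

lemma coneSet_convex (s : Finset V) : Convex ℝ (ConeSet s) := by
  intro x hx y hy a b ha hb _
  exact (coneSet_subcone s).2.1 _ ((coneSet_subcone s).2.2 a ha x hx) _
    ((coneSet_subcone s).2.2 b hb y hy)

lemma salient_pair {C : Set V} (hs : ∀ x ∈ C, -x ∈ C → x = 0) {x y : V}
    (hx : x ∈ C) (hy : y ∈ C) (hxy : x + y = 0) : x = 0 :=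
  hs x hx (by rw [neg_eq_of_add_eq_zero_right hxy]; exact hy)

lemma salient_sum_eq_zero {C : Set V} (hsub : IsSubcone C) (hs : ∀ x ∈ C, -x ∈ C → x = 0)
    {ι : Type*} {t : Finset ι} {g : ι → V} (hg : ∀ i ∈ t, g i ∈ C)
    (h0 : ∑ i ∈ t, g i = 0) : ∀ i ∈ t, g i = 0 := by
  classical
  intro i hi
  have hsum : g i + ∑ j ∈ t.erase i, g j = 0 := by
    rw [Finset.add_sum_erase _ _ hi]; exact h0
  exact salient_pair hs (hg i hi)
    (hsub.sum_mem _ _ fun j hj => hg j (Finset.mem_of_mem_erase hj)) hsum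

lemma coneSet_filter_ne_zero (s : Finset V) [DecidableEq V] :
    ConeSet s = ConeSet (s.filter (· ≠ 0)) := by
  apply Set.Subset.antisymm
  · rintro x ⟨c, hc, rfl⟩
    refine ⟨c, hc, ?_⟩
    rw [Finset.sum_filter_of_ne]
    intro v _ hv
    rintro rfl; simp at hv
  · exact coneSet_mono (Finset.filter_subset _ _)

set_option linter.unusedSectionVars false

lemma ray_structure [FiniteDimensional ℝ V] {C R : Set V}
    (hsal : ∀ x ∈ C, -x ∈ C → x = 0) (hRC : R ⊆ C) (hsub : IsSubcone R)
    (hrk : Module.finrank ℝ (Submodule.span ℝ R) = 1) :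
    ∃ p : V, p ≠ 0 ∧ p ∈ R ∧ R = {x | ∃ t : ℝ, 0 ≤ t ∧ x = t • p} := by
  have hex : ∃ p ∈ R, p ≠ 0 := by
    by_contra h
    push_neg at h
    have : R ⊆ ({0} : Set V) := fun x hx => h x hx
    have : Submodule.span ℝ R ≤ ⊥ := by
      rw [← Submodule.span_zero_singleton (R := ℝ) (M := V)]
      exact Submodule.span_mono this
    rw [le_bot_iff] at this
    rw [this] at hrk
    simp at hrk
  obtain ⟨p, hpR, hp0⟩ := hex
  have hle : Submodule.span ℝ ({p} : Set V) ≤ Submodule.span ℝ R :=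
    Submodule.span_mono (Set.singleton_subset_iff.2 hpR)
  have heq : Submodule.span ℝ ({p} : Set V) = Submodule.span ℝ R := by
    apply Submodule.eq_of_le_of_finrank_le hle
    rw [hrk, finrank_span_singleton hp0]
  refine ⟨p, hp0, hpR, ?_⟩
  ext x
  constructor
  · intro hxR
    have : x ∈ Submodule.span ℝ ({p} : Set V) := by
      rw [heq]; exact Submodule.subset_span hxR
    obtain ⟨t, rfl⟩ := Submodule.mem_span_singleton.1 this
    rcases le_or_gt 0 t with ht | ht
    · exact ⟨t, ht, rfl⟩
    · have hneg : -(t • p) ∈ C := by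
        have : (-t) • p ∈ R := hsub.2.2 (-t) (by linarith) p hpR
        rw [neg_smul] at this
        exact hRC this
      have : t • p = 0 := hsal _ (hRC hxR) hneg
      rw [smul_eq_zero] at this
      rcases this with h | h
      · exact absurd h (ne_of_lt ht)
      · exact absurd h hp0
  · rintro ⟨t, ht, rfl⟩
    exact hsub.2.2 t ht p hpR

lemma isFaceOf_trans {C F G : Set V} (hF : IsFaceOf C F) (hG : IsFaceOf F G) : IsFaceOf C G := by
  refine ⟨hG.1, hG.2.1.trans hF.2.1, ?_⟩
  intro x hx y hy hxy
  have hxF : x ∈ F ∧ y ∈ F := hF.2.2 x hx y hy (hG.2.1 hxy)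
  exact hG.2.2 x hxF.1 y hxF.2 hxy

lemma face_polyhedral {s : Finset V} {F : Set V} (hF : IsFaceOf (ConeSet s) F) :
    ∃ t : Finset V, (t : Set V) ⊆ F ∧ F = ConeSet t := by
  classical
  refine ⟨s.filter (· ∈ F), fun v hv => (Finset.mem_filter.1 hv).2, ?_⟩
  apply Set.Subset.antisymm
  · intro x hxF
    obtain ⟨c, hc, hx⟩ := hF.2.1 hxF
    have hterm : ∀ v ∈ s, c v • v ∈ F := by
      intro v hv
      have h1 : c v • v ∈ ConeSet s :=
        (coneSet_subcone s).2.2 _ (hc v) _ (mem_coneSet hv)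
      have h2 : ∑ u ∈ s.erase v, c u • u ∈ ConeSet s :=
        (coneSet_subcone s).sum_mem _ _ fun u hu =>
          (coneSet_subcone s).2.2 _ (hc u) _ (mem_coneSet (Finset.mem_of_mem_erase hu))
      have hsum : c v • v + ∑ u ∈ s.erase v, c u • u ∈ F := by
        have heq : c v • v + ∑ u ∈ s.erase v, c u • u = ∑ u ∈ s, c u • u :=
          Finset.add_sum_erase s (fun u => c u • u) hv
        rw [heq, ← hx]; exact hxF
      exact (hF.2.2 _ h1 _ h2 hsum).1
    refine ⟨c, hc, ?_⟩
    rw [hx, eq_comm]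
    apply Finset.sum_filter_of_ne
    intro v hv hne
    by_contra hvF
    have hcv : c v ≠ 0 := by
      intro h; rw [h, zero_smul] at hne; exact hne rfl
    have hcvpos : 0 < c v := lt_of_le_of_ne (hc v) (Ne.symm hcv)
    have : (c v)⁻¹ • (c v • v) ∈ F := hF.1.2.2 _ (by positivity) _ (hterm v hv)
    rw [smul_smul, inv_mul_cancel₀ hcv, one_smul] at this
    exact hvF this
  · exact coneSet_subset_of_subcone hF.1 fun v hv => (Finset.mem_filter.1 hv).2

lemma IsPolyhedralCone.image {W : Type*} [AddCommGroup W] [Module ℝ W] (g : V →ₗ[ℝ] W)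
    {C : Set V} (hC : IsPolyhedralCone C) : IsPolyhedralCone (g '' C) := by
  classical
  obtain ⟨s, rfl⟩ := isPolyhedralCone_iff.1 hC
  refine isPolyhedralCone_iff.2 ⟨s.image g, ?_⟩
  apply Set.Subset.antisymm
  · rintro _ ⟨x, ⟨c, hc, rfl⟩, rfl⟩
    refine ⟨fun w => ∑ v ∈ s.filter (g · = w), c v, fun w => Finset.sum_nonneg fun v _ => hc v, ?_⟩
    rw [map_sum]
    simp_rw [map_smul]
    rw [← Finset.sum_fiberwise_of_maps_to (fun v hv => Finset.mem_image_of_mem g hv)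
      (fun v => c v • g v)]
    apply Finset.sum_congr rfl
    intro w _
    rw [Finset.sum_smul]
    apply Finset.sum_congr rfl
    intro v hv
    rw [(Finset.mem_filter.1 hv).2]
  · intro x hx
    have hsub : IsSubcone (g '' ConeSet s) := by
      refine ⟨⟨0, (coneSet_subcone s).1, map_zero g⟩, ?_, ?_⟩
      · rintro _ ⟨a, ha, rfl⟩ _ ⟨b, hb, rfl⟩
        exact ⟨a + b, (coneSet_subcone s).2.1 _ ha _ hb, map_add g a b⟩
      · rintro t ht _ ⟨a, ha, rfl⟩
        exact ⟨t • a, (coneSet_subcone s).2.2 t ht a ha, map_smul g t a⟩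
    obtain ⟨c, hc, rfl⟩ := hx
    apply hsub.sum_mem
    intro w hw
    obtain ⟨v, hv, rfl⟩ := Finset.mem_image.1 hw
    exact hsub.2.2 _ (hc _) _ ⟨v, mem_coneSet hv, rfl⟩

section Euclidean

variable {n : ℕ}

local notation "E" => EuclideanSpace ℝ (Fin n)

lemma exists_pos_functional (s : Finset E) (h0 : (0 : E) ∉ convexHull ℝ (s : Set E)) :
    ∃ f : E →ₗ[ℝ] ℝ, ∀ v ∈ s, 0 < f v := by
  obtain ⟨f, u, hfu, hu⟩ := geometric_hahn_banach_point_closed (convex_convexHull ℝ _)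
    (((s : Set E).toFinite.isCompact_convexHull (𝕜 := ℝ)).isClosed) h0
  refine ⟨f.toLinearMap, fun v hv => ?_⟩
  have h1 : (0 : ℝ) < u := by simpa using hfu
  exact lt_trans h1 (hu v (subset_convexHull ℝ _ hv))

lemma minkowski_span_points {D : Set E} (hD : IsPolyhedralCone D)
    (hsal : ∀ x ∈ D, -x ∈ D → x = 0) :
    D ⊆ ↑(Submodule.span ℝ (⋃ R ∈ {R : Set E | IsExtremalRayOf D R}, R)) := by
  classical
  obtain ⟨s, rfl⟩ := isPolyhedralCone_iff.1 hD
  set D := ConeSet s with hDdef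
  set s' : Finset E := s.filter (· ≠ 0) with hs'def
  have hDs' : D = ConeSet s' := coneSet_filter_ne_zero s
  have hs'0 : ∀ v ∈ s', v ≠ 0 := fun v hv => (Finset.mem_filter.1 hv).2
  have hs's : ∀ v ∈ s', v ∈ s := fun v hv => (Finset.mem_filter.1 hv).1
  -- 0 is not in the convex hull of s'
  have h0 : (0 : E) ∉ convexHull ℝ (s' : Set E) := by
    intro h
    rw [Finset.convexHull_eq] at h
    obtain ⟨w, hw0, hw1, hwc⟩ := h
    rw [Finset.centerMass_eq_of_sum_1 _ _ hw1] at hwc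
    have hz : ∀ v ∈ s', w v • v = 0 := by
      apply salient_sum_eq_zero (coneSet_subcone s) hsal
      · intro v hv
        exact (coneSet_subcone s).2.2 _ (hw0 v hv) _ (mem_coneSet (hs's v hv))
      · simpa using hwc
    have hwz : ∀ v ∈ s', w v = 0 := by
      intro v hv
      rcases smul_eq_zero.1 (hz v hv) with h | h
      · exact h
      · exact absurd h (hs'0 v hv)
    rw [Finset.sum_congr rfl hwz] at hw1
    simp at hw1
  obtain ⟨f, hf⟩ := exists_pos_functional s' h0
  -- f is strictly positive on nonzero elements of D
  have hfsum : ∀ c : E → ℝ, f (∑ v ∈ s', c v • v) = ∑ v ∈ s', c v * f v := by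
    intro c
    rw [map_sum]
    exact Finset.sum_congr rfl fun v _ => by rw [map_smul, smul_eq_mul]
  have hfD : ∀ x ∈ D, 0 ≤ f x := by
    rw [hDs']
    rintro x ⟨c, hc, rfl⟩
    rw [hfsum]
    exact Finset.sum_nonneg fun v hv => mul_nonneg (hc v) (le_of_lt (hf v hv))
  have hfD0 : ∀ x ∈ D, f x = 0 → x = 0 := by
    rw [hDs']
    rintro x ⟨c, hc, rfl⟩ hfx
    rw [hfsum] at hfx
    have hz := (Finset.sum_eq_zero_iff_of_nonneg
      (fun v hv => mul_nonneg (hc v) (le_of_lt (hf v hv)))).1 hfx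
    have : ∀ v ∈ s', c v • v = 0 := by
      intro v hv
      have : c v = 0 := by
        have := hz v hv
        have hfv := hf v hv
        nlinarith [hf v hv]
      rw [this, zero_smul]
    rw [Finset.sum_congr rfl this]
    simp
  -- the compact base K
  set g : E → E := fun v => (f v)⁻¹ • v with hgdef
  set K : Set E := convexHull ℝ (g '' (s' : Set E)) with hKdef
  have hKD : K ⊆ D := by
    apply convexHull_min _ (hDs' ▸ coneSet_convex s')
    rintro _ ⟨v, hv, rfl⟩
    rw [hDs']
    exact (coneSet_subcone s').2.2 _ (inv_nonneg.2 (le_of_lt (hf v hv))) _ (mem_coneSet hv)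
  have hfK : ∀ x ∈ K, f x = 1 := by
    have : K ⊆ {x | f x = 1} := by
      apply convexHull_min _ (convex_hyperplane f.isLinear 1)
      rintro _ ⟨v, hv, rfl⟩
      show f ((f v)⁻¹ • v) = 1
      rw [map_smul, smul_eq_mul, inv_mul_cancel₀ (ne_of_gt (hf v hv))]
    exact fun x hx => this hx
  have hlevel : ∀ x ∈ D, f x = 1 → x ∈ K := by
    intro x hxD hfx
    rw [hDs'] at hxD
    obtain ⟨c, hc, rfl⟩ := hxD
    set w : E → ℝ := fun v => c v * f v with hwdef
    have hw0 : ∀ v ∈ s', 0 ≤ w v := fun v hv => mul_nonneg (hc v) (le_of_lt (hf v hv))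
    have hw1 : ∑ v ∈ s', w v = 1 := by rw [← hfsum c, hfx]
    have hmem := Finset.centerMass_mem_convexHull s' hw0 (by rw [hw1]; norm_num)
      (fun v hv => Set.mem_image_of_mem g hv)
    rw [Finset.centerMass_eq_of_sum_1 _ _ hw1] at hmem
    have : ∑ v ∈ s', w v • g v = ∑ v ∈ s', c v • v := by
      apply Finset.sum_congr rfl
      intro v hv
      rw [hgdef, hwdef]
      simp only [smul_smul]
      rw [mul_inv_cancel_right₀ (ne_of_gt (hf v hv))]
    rwa [this] at hmem
  have hKcomp : IsCompact K := ((s' : Set E).toFinite.image g).isCompact_convexHull (𝕜 := ℝ)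
  have hKM := closure_convexHull_extremePoints hKcomp (convex_convexHull ℝ _)
  -- extreme points give extremal rays
  have hext : ∀ p ∈ K.extremePoints ℝ,
      IsExtremalRayOf D {x | ∃ t : ℝ, 0 ≤ t ∧ x = t • p} := by
    intro p hp
    have hpK : p ∈ K := extremePoints_subset hp
    have hfp : f p = 1 := hfK p hpK
    have hp0 : p ≠ 0 := by intro h; rw [h, map_zero] at hfp; norm_num at hfp
    set R : Set E := {x | ∃ t : ℝ, 0 ≤ t ∧ x = t • p} with hRdef
    have hRsub : IsSubcone R := by
      refine ⟨⟨0, le_refl 0, (zero_smul ℝ p).symm⟩, ?_, ?_⟩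
      · rintro _ ⟨a, ha, rfl⟩ _ ⟨b, hb, rfl⟩
        exact ⟨a + b, add_nonneg ha hb, (add_smul a b p).symm⟩
      · rintro t ht _ ⟨a, ha, rfl⟩
        exact ⟨t * a, mul_nonneg ht ha, (mul_smul t a p).symm⟩
    have hRD : R ⊆ D := by
      rintro _ ⟨t, ht, rfl⟩
      exact (hDs' ▸ coneSet_subcone s').2.2 t ht p (hKD hpK)
    refine ⟨⟨hRsub, hRD, ?_⟩, ?_⟩
    · intro x hx y hy hxy
      obtain ⟨t, ht, heq⟩ := hxy
      rcases eq_or_lt_of_le ht with ht0 | htpos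
      · rw [← ht0, zero_smul] at heq
        have hx0 : x = 0 := salient_pair hsal hx hy heq
        have hy0 : y = 0 := by
          rw [hx0, zero_add] at heq; exact heq
        rw [hx0, hy0]
        exact ⟨hRsub.1, hRsub.1⟩
      · have hfxy : f x + f y = t := by
          have : f (x + y) = t * f p := by rw [heq, map_smul, smul_eq_mul]
          rw [map_add, hfp, mul_one] at this
          exact this
        have main : ∀ z z' : E, z ∈ D → z' ∈ D → z + z' = t • p → 0 < f z → z ∈ R := by
          intro z z' hz hz' heq' hfz
          have hfz' : 0 ≤ f z' := hfD z' hz'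
          have hfzz' : f z + f z' = t := by
            have : f (z + z') = t * f p := by rw [heq', map_smul, smul_eq_mul]
            rw [map_add, hfp, mul_one] at this
            exact this
          set zh : E := (f z)⁻¹ • z with hzh
          have hzhK : zh ∈ K := by
            apply hlevel
            · exact (hDs' ▸ coneSet_subcone s').2.2 _ (inv_nonneg.2 (le_of_lt hfz)) _ hz
            · rw [hzh, map_smul, smul_eq_mul, inv_mul_cancel₀ (ne_of_gt hfz)]
          rcases eq_or_lt_of_le hfz' with hfz'0 | hfz'pos
          · -- z' = 0, so z = t • p
            have hz'0 : z' = 0 := hfD0 z' hz' hfz'0.symm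
            rw [hz'0, add_zero] at heq'
            exact ⟨t, le_of_lt htpos, heq'⟩
          · set z'h : E := (f z')⁻¹ • z' with hz'h
            have hz'hK : z'h ∈ K := by
              apply hlevel
              · exact (hDs' ▸ coneSet_subcone s').2.2 _ (inv_nonneg.2 (le_of_lt hfz'pos)) _ hz'
              · rw [hz'h, map_smul, smul_eq_mul, inv_mul_cancel₀ (ne_of_gt hfz'pos)]
            have hseg : p ∈ openSegment ℝ zh z'h := by
              refine ⟨f z / t, f z' / t, div_pos hfz htpos, div_pos hfz'pos htpos, ?_, ?_⟩
              · field_simp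
                linarith
              · rw [hzh, hz'h, smul_smul, smul_smul]
                have h1 : f z / t * (f z)⁻¹ = t⁻¹ := by field_simp
                have h2 : f z' / t * (f z')⁻¹ = t⁻¹ := by field_simp
                rw [h1, h2, ← smul_add, heq', smul_smul,
                  inv_mul_cancel₀ (ne_of_gt htpos), one_smul]
            have := (mem_extremePoints.1 hp).2 zh hzhK z'h hz'hK hseg
            have hzp : z = f z • p := by
              have : zh = p := this.1
              rw [hzh] at this
              calc z = f z • ((f z)⁻¹ • z) := by
                      rw [smul_smul, mul_inv_cancel₀ (ne_of_gt hfz), one_smul]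
                _ = f z • p := by rw [this]
            exact ⟨f z, le_of_lt hfz, hzp⟩
        rcases eq_or_lt_of_le (hfD x hx) with hfx0 | hfxpos
        · have hx0 : x = 0 := hfD0 x hx hfx0.symm
          constructor
          · rw [hx0]; exact hRsub.1
          · rw [hx0, zero_add] at heq
            exact ⟨t, ht, heq⟩
        · constructor
          · exact main x y hx hy heq hfxpos
          · rcases eq_or_lt_of_le (hfD y hy) with hfy0 | hfypos
            · have hy0 : y = 0 := hfD0 y hy hfy0.symm
              rw [hy0]; exact hRsub.1
            · exact main y x hy hx (by rw [add_comm]; exact heq) hfypos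
    · have hspan : Submodule.span ℝ R = Submodule.span ℝ ({p} : Set E) := by
        apply le_antisymm
        · rw [Submodule.span_le]
          rintro _ ⟨t, _, rfl⟩
          exact Submodule.mem_span_singleton.2 ⟨t, rfl⟩
        · exact Submodule.span_mono (Set.singleton_subset_iff.2 ⟨1, zero_le_one, (one_smul ℝ p).symm⟩)
      rw [hspan, finrank_span_singleton hp0]
  -- conclude
  set M := Submodule.span ℝ (⋃ R ∈ {R : Set E | IsExtremalRayOf D R}, R) with hMdef
  have hKM' : K ⊆ ↑M := by
    have h1 : K.extremePoints ℝ ⊆ ↑M := by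
      intro p hp
      apply Submodule.subset_span
      refine Set.mem_biUnion (hext p hp) ⟨1, zero_le_one, (one_smul ℝ p).symm⟩
    have h2 : convexHull ℝ (K.extremePoints ℝ) ⊆ ↑M :=
      convexHull_min h1 (M.convex)
    calc K = closure (convexHull ℝ (K.extremePoints ℝ)) := hKM.symm
      _ ⊆ closure ↑M := closure_mono h2
      _ = ↑M := (Submodule.closed_of_finiteDimensional M).closure_eq
  rw [hDs']
  rintro x ⟨c, hc, rfl⟩
  apply Submodule.sum_mem
  intro v hv
  apply Submodule.smul_mem
  have : v = f v • g v := by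
    rw [hgdef]
    simp only [smul_smul]
    rw [mul_inv_cancel₀ (ne_of_gt (hf v hv)), one_smul]
  rw [this]
  exact Submodule.smul_mem _ _ (hKM' (subset_convexHull ℝ _ (Set.mem_image_of_mem g hv)))

end Euclidean

section Transfer

variable {W : Type*} [AddCommGroup W] [Module ℝ W]

lemma isExtremalRayOf_image (e : W ≃ₗ[ℝ] V) {D R : Set W} (h : IsExtremalRayOf D R) :
    IsExtremalRayOf (e '' D) (e '' R) := by
  obtain ⟨⟨⟨hR0, hRadd, hRsmul⟩, hRD, hface⟩, hrk⟩ := h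
  refine ⟨⟨⟨⟨0, hR0, map_zero e⟩, ?_, ?_⟩, Set.image_mono hRD, ?_⟩, ?_⟩
  · rintro _ ⟨a, ha, rfl⟩ _ ⟨b, hb, rfl⟩
    exact ⟨a + b, hRadd a ha b hb, map_add e a b⟩
  · rintro t ht _ ⟨a, ha, rfl⟩
    exact ⟨t • a, hRsmul t ht a ha, map_smul e t a⟩
  · rintro _ ⟨a, ha, rfl⟩ _ ⟨b, hb, rfl⟩ ⟨r, hr, hre⟩
    have hab : a + b = r := by
      apply e.injective
      rw [map_add, hre]
    rw [← hab] at hr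
    obtain ⟨ha', hb'⟩ := hface a ha b hb hr
    exact ⟨⟨a, ha', rfl⟩, ⟨b, hb', rfl⟩⟩
  · have himg : e '' R = (e : W →ₗ[ℝ] V) '' R := rfl
    have hms : Submodule.span ℝ ((e : W →ₗ[ℝ] V) '' R) =
        (Submodule.span ℝ R).map (e : W →ₗ[ℝ] V) :=
      (Submodule.map_span (σ₁₂ := RingHom.id ℝ) (e : W →ₗ[ℝ] V) R).symm
    rw [himg, hms, LinearEquiv.finrank_map_eq]
    exact hrk

lemma minkowski_span_points' [FiniteDimensional ℝ V] {D : Set V} (hD : IsPolyhedralCone D)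
    (hsal : ∀ x ∈ D, -x ∈ D → x = 0) :
    D ⊆ ↑(Submodule.span ℝ (⋃ R ∈ {R : Set V | IsExtremalRayOf D R}, R)) := by
  set n := finrank ℝ V with hn
  obtain ⟨e⟩ : Nonempty (V ≃ₗ[ℝ] EuclideanSpace ℝ (Fin n)) := by
    exact ⟨(Module.finBasis ℝ V).equivFun.trans
      ((EuclideanSpace.equiv (Fin n) ℝ).symm.toLinearEquiv)⟩
  intro x hx
  have hDE : IsPolyhedralCone (e '' D) := hD.image (e : V →ₗ[ℝ] EuclideanSpace ℝ (Fin n))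
  have hsalE : ∀ y ∈ e '' D, -y ∈ e '' D → y = 0 := by
    rintro _ ⟨a, ha, rfl⟩ ⟨b, hb, hbe⟩
    have : b = -a := by
      apply e.injective
      rw [hbe, map_neg]
    rw [this] at hb
    rw [hsal a ha hb, map_zero]
  have h1 := minkowski_span_points hDE hsalE ⟨x, hx, rfl⟩
  set M := Submodule.span ℝ (⋃ R ∈ {R : Set V | IsExtremalRayOf D R}, R) with hM
  have h2 : Submodule.span ℝ (⋃ R ∈ {R : Set (EuclideanSpace ℝ (Fin n)) |
      IsExtremalRayOf (e '' D) R}, R) ≤ M.map (e : V →ₗ[ℝ] EuclideanSpace ℝ (Fin n)) := by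
    rw [Submodule.span_le]
    intro r' hr'
    obtain ⟨R', hR', hrR'⟩ := Set.mem_iUnion₂.1 hr'
    have hback : IsExtremalRayOf (e.symm '' (e '' D)) (e.symm '' R') :=
      isExtremalRayOf_image e.symm hR'
    have himg : e.symm '' (e '' D) = D := by
      ext y; simp [Set.mem_image]
    rw [himg] at hback
    have hmem : e.symm r' ∈ M := by
      apply Submodule.subset_span
      exact Set.mem_biUnion hback ⟨r', hrR', rfl⟩
    refine ⟨e.symm r', hmem, ?_⟩
    simp
  have h3 : e x ∈ M.map (e : V →ₗ[ℝ] EuclideanSpace ℝ (Fin n)) := h2 h1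
  obtain ⟨u, hu, hue⟩ := h3
  have : u = x := e.injective hue
  rwa [this] at hu

end Transfer

section MoreAux

lemma ray_subcone (p : V) : IsSubcone {x : V | ∃ t : ℝ, 0 ≤ t ∧ x = t • p} := by
  refine ⟨⟨0, le_refl 0, (zero_smul ℝ p).symm⟩, ?_, ?_⟩
  · rintro _ ⟨a, ha, rfl⟩ _ ⟨b, hb, rfl⟩
    exact ⟨a + b, add_nonneg ha hb, (add_smul a b p).symm⟩
  · rintro t ht _ ⟨a, ha, rfl⟩
    exact ⟨t * a, mul_nonneg ht ha, (mul_smul t a p).symm⟩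

lemma ray_finrank {p : V} (hp : p ≠ 0) :
    Module.finrank ℝ (Submodule.span ℝ {x : V | ∃ t : ℝ, 0 ≤ t ∧ x = t • p}) = 1 := by
  have hspan : Submodule.span ℝ {x : V | ∃ t : ℝ, 0 ≤ t ∧ x = t • p}
      = Submodule.span ℝ ({p} : Set V) := by
    apply le_antisymm
    · rw [Submodule.span_le]
      rintro _ ⟨t, _, rfl⟩
      exact Submodule.mem_span_singleton.2 ⟨t, rfl⟩
    · exact Submodule.span_mono
        (Set.singleton_subset_iff.2 ⟨1, zero_le_one, (one_smul ℝ p).symm⟩)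
  rw [hspan, finrank_span_singleton hp]

end MoreAux


set_option maxHeartbeats 1000000 in
open Pointwise in
theorem stmt0 [FiniteDimensional ℝ V] (C : Set V) (hC : IsPolyhedralCone C)
    (hsalient : ∀ x ∈ C, -x ∈ C → x = 0)
    (R₀ : Set V) (hR₀ : IsExtremalRayOf C R₀) :
    Submodule.span ℝ (R₀ ∪ ⋃ R ∈ {R : Set V | AreAdjacent C R₀ R}, R) =
      Submodule.span ℝ C := by
  classical
  obtain ⟨s, hCs⟩ := isPolyhedralCone_iff.1 hC
  have hCsub : IsSubcone C := hCs ▸ coneSet_subcone s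
  set U := Submodule.span ℝ (R₀ ∪ ⋃ R ∈ {R : Set V | AreAdjacent C R₀ R}, R) with hU
  -- the easy inclusion
  have hle : U ≤ Submodule.span ℝ C := by
    rw [hU, Submodule.span_le]
    apply Set.union_subset
    · exact fun x hx => Submodule.subset_span (hR₀.1.2.1 hx)
    · intro x hx
      obtain ⟨R, hR, hxR⟩ := Set.mem_iUnion₂.1 hx
      exact Submodule.subset_span (hR.2.1.1.2.1 hxR)
  -- ray structure of R₀
  obtain ⟨x₀, hx₀ne, hx₀R₀, hR₀eq⟩ := ray_structure hsalient hR₀.1.2.1 hR₀.1.1 hR₀.2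
  have hx₀C : x₀ ∈ C := hR₀.1.2.1 hx₀R₀
  set L : Submodule ℝ V := Submodule.span ℝ ({x₀} : Set V) with hL
  set π : V →ₗ[ℝ] V ⧸ L := L.mkQ with hπ
  have hker : ∀ y : V, π y = 0 ↔ y ∈ L := fun y => by
    rw [← LinearMap.mem_ker, Submodule.ker_mkQ]
  have hπx₀ : π x₀ = 0 := (hker x₀).2 (Submodule.mem_span_singleton_self x₀)
  have hR₀π : ∀ r ∈ R₀, π r = 0 := by
    intro r hr
    rw [hR₀eq] at hr
    obtain ⟨t, _, rfl⟩ := hr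
    rw [map_smul, hπx₀, smul_zero]
  have hx₀U : x₀ ∈ U := Submodule.subset_span (Set.mem_union_left _ hx₀R₀)
  have hLU : L ≤ U := by
    rw [hL, Submodule.span_le]
    exact Set.singleton_subset_iff.2 hx₀U
  -- the quotient cone
  set C' : Set (V ⧸ L) := π '' C with hC'
  have hC'poly : IsPolyhedralCone C' := hC.image π
  have hC'sal : ∀ y ∈ C', -y ∈ C' → y = 0 := by
    rintro _ ⟨a, haC, rfl⟩ ⟨c, hcC, hce⟩
    have h0 : π (a + c) = 0 := by rw [map_add, hce, add_neg_cancel]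
    obtain ⟨t, ht⟩ := Submodule.mem_span_singleton.1 ((hker _).1 h0)
    -- ht : t • x₀ = a + c
    rcases le_or_gt 0 t with htpos | htneg
    · have hmem : a + c ∈ R₀ := by rw [hR₀eq]; exact ⟨t, htpos, ht.symm⟩
      exact hR₀π a (hR₀.1.2.2 a haC c hcC hmem).1
    · have h1 : (-t) • x₀ ∈ C := hR₀.1.2.1 (by rw [hR₀eq]; exact ⟨-t, by linarith, rfl⟩)
      have h2 : c + (-t) • x₀ ∈ C := hCsub.2.1 c hcC _ h1
      have h3 : a + (c + (-t) • x₀) = 0 := by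
        have : a + (c + (-t) • x₀) = (a + c) + (-t) • x₀ := by abel
        rw [this, ← ht, neg_smul, add_neg_cancel]
      rw [salient_pair hsalient haC h2 h3, map_zero]
  have hMk := minkowski_span_points' hC'poly hC'sal
  -- per-ray analysis
  have hray : ∀ R' : Set (V ⧸ L), IsExtremalRayOf C' R' → R' ⊆ ↑(U.map π) := by
    intro R' hR'
    set F : Set V := C ∩ π ⁻¹' R' with hF
    have hFface : IsFaceOf C F := by
      refine ⟨⟨⟨hCsub.1, ?_⟩, ?_, ?_⟩, Set.inter_subset_left, ?_⟩
      · show π 0 ∈ R'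
        rw [map_zero]; exact hR'.1.1.1
      · rintro x ⟨hxC', hxR'⟩ y ⟨hyC', hyR'⟩
        refine ⟨hCsub.2.1 x hxC' y hyC', ?_⟩
        show π (x + y) ∈ R'
        rw [map_add]
        exact hR'.1.1.2.1 _ hxR' _ hyR'
      · rintro t ht x ⟨hxC', hxR'⟩
        refine ⟨hCsub.2.2 t ht x hxC', ?_⟩
        show π (t • x) ∈ R'
        rw [map_smul]
        exact hR'.1.1.2.2 t ht _ hxR'
      · intro x hx y hy hxy
        have hxC' : π x ∈ C' := ⟨x, hx, rfl⟩
        have hyC' : π y ∈ C' := ⟨y, hy, rfl⟩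
        have hsum : π x + π y ∈ R' := by
          rw [← map_add]; exact hxy.2
        obtain ⟨h1, h2⟩ := hR'.1.2.2 _ hxC' _ hyC' hsum
        exact ⟨⟨hx, h1⟩, ⟨hy, h2⟩⟩
    obtain ⟨p', hp'ne, hp'R', hR'eq⟩ := ray_structure hC'sal hR'.1.2.1 hR'.1.1 hR'.2
    obtain ⟨c₀, hc₀C, hc₀π⟩ := hR'.1.2.1 hp'R'
    have hc₀F : c₀ ∈ F := ⟨hc₀C, by simp only [Set.mem_preimage]; rw [hc₀π]; exact hp'R'⟩
    have hR₀F : R₀ ⊆ F := fun r hr =>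
      ⟨hR₀.1.2.1 hr, by simp only [Set.mem_preimage]; rw [hR₀π r hr]; exact hR'.1.1.1⟩
    -- functionals ψ and θ
    have hφex : ∃ φ : Module.Dual ℝ (V ⧸ L), φ p' = 1 := by
      have : ∃ φ₀ : Module.Dual ℝ (V ⧸ L), φ₀ p' ≠ 0 := by
        by_contra h
        push_neg at h
        exact hp'ne ((Module.forall_dual_apply_eq_zero_iff ℝ p').1 h)
      obtain ⟨φ₀, hφ₀⟩ := this
      exact ⟨(φ₀ p')⁻¹ • φ₀, by
        rw [LinearMap.smul_apply, smul_eq_mul, inv_mul_cancel₀ hφ₀]⟩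
    obtain ⟨φ, hφ⟩ := hφex
    set ψ : V →ₗ[ℝ] ℝ := φ ∘ₗ π with hψdef
    have hψx₀ : ψ x₀ = 0 := by
      rw [hψdef, LinearMap.comp_apply, hπx₀, map_zero]
    have hψc₀ : ψ c₀ = 1 := by
      rw [hψdef, LinearMap.comp_apply, hc₀π, hφ]
    have hφ₁ex : ∃ φ₁ : Module.Dual ℝ V, φ₁ x₀ = 1 := by
      have : ∃ φ₀ : Module.Dual ℝ V, φ₀ x₀ ≠ 0 := by
        by_contra h
        push_neg at h
        exact hx₀ne ((Module.forall_dual_apply_eq_zero_iff ℝ x₀).1 h)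
      obtain ⟨φ₀, hφ₀⟩ := this
      exact ⟨(φ₀ x₀)⁻¹ • φ₀, by
        rw [LinearMap.smul_apply, smul_eq_mul, inv_mul_cancel₀ hφ₀]⟩
    obtain ⟨φ₁, hφ₁⟩ := hφ₁ex
    set θ : V →ₗ[ℝ] ℝ := φ₁ - (φ₁ c₀) • ψ with hθdef
    have hθx₀ : θ x₀ = 1 := by
      rw [hθdef, LinearMap.sub_apply, LinearMap.smul_apply, hφ₁, hψx₀, smul_zero, sub_zero]
    have hθc₀ : θ c₀ = 0 := by
      rw [hθdef, LinearMap.sub_apply, LinearMap.smul_apply, hψc₀, smul_eq_mul, mul_one, sub_self]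
    -- decomposition of elements of F
    have hdecomp : ∀ x ∈ F, 0 ≤ ψ x ∧ x = θ x • x₀ + ψ x • c₀ := by
      intro x hxF
      have hπxR' : π x ∈ R' := hxF.2
      rw [hR'eq] at hπxR'
      obtain ⟨t, ht, hπx⟩ := hπxR'
      have hψx : ψ x = t := by
        rw [hψdef, LinearMap.comp_apply, hπx, map_smul, hφ, smul_eq_mul, mul_one]
      have hxtL : x - t • c₀ ∈ L := by
        apply (hker _).1
        rw [map_sub, map_smul, hc₀π, hπx, sub_self]
      obtain ⟨a, ha⟩ := Submodule.mem_span_singleton.1 hxtL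
      -- ha : a • x₀ = x - t • c₀
      have hax : x = a • x₀ + t • c₀ := by
        rw [ha]; abel
      have hθx : θ x = a := by
        rw [hax, map_add, map_smul, map_smul, hθx₀, hθc₀, smul_eq_mul, smul_eq_mul,
          mul_one, mul_zero, add_zero]
      constructor
      · rw [hψx]; exact ht
      · rw [hθx, hψx]; exact hax
    -- F is polyhedral
    obtain ⟨tF, htF, hFt⟩ := face_polyhedral (show IsFaceOf (ConeSet s) F from hCs ▸ hFface)
    -- the generators with positive ψ
    set wt : Finset V := tF.filter (fun v => 0 < ψ v) with hwt
    have hwtne : wt.Nonempty := by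
      by_contra h
      rw [Finset.not_nonempty_iff_eq_empty, Finset.filter_eq_empty_iff] at h
      have hz : ∀ v ∈ tF, ψ v = 0 := fun v hv =>
        le_antisymm (not_lt.1 (h hv)) (hdecomp v (htF hv)).1
      have hψc₀' : ψ c₀ = 0 := by
        have hc₀' := hc₀F
        rw [hFt] at hc₀'
        obtain ⟨c, hc, hce⟩ := hc₀'
        rw [hce, map_sum]
        apply Finset.sum_eq_zero
        intro v hv
        rw [map_smul, smul_eq_mul, hz v hv, mul_zero]
      rw [hψc₀] at hψc₀'
      norm_num at hψc₀'
    obtain ⟨w, hwwt, hwmin⟩ := wt.exists_min_image (fun v => θ v / ψ v) hwtne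
    have hwtF : w ∈ tF := (Finset.mem_filter.1 hwwt).1
    have hwF : w ∈ F := htF hwtF
    have hψw : 0 < ψ w := (Finset.mem_filter.1 hwwt).2
    have hwne : w ≠ 0 := by
      intro h
      rw [h, map_zero] at hψw
      exact lt_irrefl 0 hψw
    -- the functional χ
    set χ : V →ₗ[ℝ] ℝ := ψ w • θ - θ w • ψ with hχdef
    have hχ : ∀ x : V, χ x = ψ w * θ x - θ w * ψ x := by
      intro x
      rw [hχdef, LinearMap.sub_apply, LinearMap.smul_apply, LinearMap.smul_apply,
        smul_eq_mul, smul_eq_mul]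
    have hχw : χ w = 0 := by rw [hχ]; ring
    have hχgen : ∀ v ∈ tF, 0 ≤ χ v := by
      intro v hv
      have hvF := htF hv
      obtain ⟨hψv, hvdec⟩ := hdecomp v hvF
      rcases eq_or_lt_of_le hψv with h0 | hpos
      · -- ψ v = 0
        have hveq : v = θ v • x₀ := by
          have h' := hvdec
          rw [← h0, zero_smul, add_zero] at h'
          exact h'
        have hθv : 0 ≤ θ v := by
          by_contra hneg
          push_neg at hneg
          have hmv : -v = (-θ v) • x₀ := by
            rw [neg_smul]
            exact congrArg Neg.neg hveq
          have h1 : -v ∈ C := by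
            rw [hmv]
            exact hCsub.2.2 (-θ v) (by linarith) x₀ hx₀C
          have hv0 : v = 0 := hsalient v (hFface.2.1 hvF) h1
          have hz0 : θ v • x₀ = 0 := by rw [← hveq]; exact hv0
          rcases smul_eq_zero.1 hz0 with h | h
          · exact absurd h hneg.ne
          · exact hx₀ne h
        rw [hχ, ← h0, mul_zero, sub_zero]
        exact mul_nonneg (le_of_lt hψw) hθv
      · have hvwt : v ∈ wt := Finset.mem_filter.2 ⟨hv, hpos⟩
        have hmin := hwmin v hvwt
        rw [div_le_div_iff₀ hψw hpos] at hmin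
        -- hmin : θ w * ψ v ≤ θ v * ψ w
        rw [hχ, sub_nonneg]
        exact hmin.trans_eq (mul_comm _ _)
    have hχF : ∀ x ∈ F, 0 ≤ χ x := by
      intro x hx
      rw [hFt] at hx
      obtain ⟨c, hc, rfl⟩ := hx
      rw [map_sum]
      apply Finset.sum_nonneg
      intro v hv
      rw [map_smul, smul_eq_mul]
      exact mul_nonneg (hc v) (hχgen v hv)
    -- the adjacent ray R
    set R : Set V := {x : V | ∃ u : ℝ, 0 ≤ u ∧ x = u • w} with hRdef
    have hRsub : IsSubcone R := ray_subcone w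
    have hRF : R ⊆ F := by
      rintro _ ⟨u, hu, rfl⟩
      exact hFface.1.2.2 u hu w hwF
    obtain ⟨_, hwdec⟩ := hdecomp w hwF
    -- key decomposition: every element of F is a nonneg combination of x₀ and w
    have hkey : ∀ x ∈ F, ∃ a b : ℝ, 0 ≤ a ∧ 0 ≤ b ∧ x = a • x₀ + b • w := by
      intro x hx
      obtain ⟨hψx, hxdec⟩ := hdecomp x hx
      have hχx := hχF x hx
      refine ⟨χ x / ψ w, ψ x / ψ w, div_nonneg hχx (le_of_lt hψw),
        div_nonneg hψx (le_of_lt hψw), ?_⟩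
      have hrhs : (χ x / ψ w) • x₀ + (ψ x / ψ w) • w
          = (χ x / ψ w + ψ x / ψ w * θ w) • x₀ + (ψ x / ψ w * ψ w) • c₀ := by
        nth_rewrite 3 [hwdec]
        rw [smul_add, smul_smul, smul_smul, ← add_assoc, ← add_smul]
      have hs1 : χ x / ψ w + ψ x / ψ w * θ w = θ x := by
        rw [hχ x]
        field_simp
        ring
      have hs2 : ψ x / ψ w * ψ w = ψ x := div_mul_cancel₀ _ (ne_of_gt hψw)
      rw [hrhs, hs1, hs2]
      exact hxdec
    -- F = R₀ + R
    have hFeq : F = R₀ + R := by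
      apply Set.Subset.antisymm
      · intro x hx
        obtain ⟨a, b, ha, hb, hab⟩ := hkey x hx
        refine Set.mem_add.2 ⟨a • x₀, ?_, b • w, ⟨b, hb, rfl⟩, hab.symm⟩
        rw [hR₀eq]; exact ⟨a, ha, rfl⟩
      · intro x hx
        obtain ⟨y, hy, z, hz, rfl⟩ := Set.mem_add.1 hx
        exact hFface.1.2.1 y (hR₀F hy) z (hRF hz)
    -- R is a face of F
    have hmemR : ∀ z ∈ F, χ z = 0 → z ∈ R := by
      intro z hz hχz
      obtain ⟨hψz, hzdec⟩ := hdecomp z hz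
      rw [hχ z] at hχz
      refine ⟨ψ z / ψ w, div_nonneg hψz (le_of_lt hψw), ?_⟩
      have hθz : θ z = ψ z / ψ w * θ w := by
        rw [div_mul_eq_mul_div, eq_div_iff (ne_of_gt hψw)]
        linear_combination hχz
      have hrhs : (ψ z / ψ w) • w = (ψ z / ψ w * θ w) • x₀ + (ψ z / ψ w * ψ w) • c₀ := by
        nth_rewrite 2 [hwdec]
        rw [smul_add, smul_smul, smul_smul]
      have hs2 : ψ z / ψ w * ψ w = ψ z := div_mul_cancel₀ _ (ne_of_gt hψw)
      rw [hrhs, hs2, ← hθz]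
      exact hzdec
    have hRface : IsFaceOf F R := by
      refine ⟨hRsub, hRF, ?_⟩
      intro x hx y hy hxy
      obtain ⟨u, hu, huw⟩ := hxy
      have hχxy : χ x + χ y = 0 := by
        have : χ (x + y) = u * χ w := by rw [huw, map_smul, smul_eq_mul]
        rw [map_add, hχw, mul_zero] at this
        exact this
      have hχx0 : χ x = 0 := le_antisymm (by linarith [hχF y hy]) (hχF x hx)
      have hχy0 : χ y = 0 := by linarith [hχF x hx, hχF y hy]
      exact ⟨hmemR x hx hχx0, hmemR y hy hχy0⟩
    have hRextr : IsExtremalRayOf C R :=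
      ⟨isFaceOf_trans hFface hRface, ray_finrank hwne⟩
    have hRne : R₀ ≠ R := by
      intro h
      have hwR₀ : w ∈ R₀ := h ▸ ⟨1, zero_le_one, (one_smul ℝ w).symm⟩
      rw [hR₀eq] at hwR₀
      obtain ⟨t, _, hw⟩ := hwR₀
      rw [hw, map_smul, hψx₀, smul_zero] at hψw
      exact lt_irrefl 0 hψw
    have hadj : AreAdjacent C R₀ R := ⟨hR₀, hRextr, hRne, by rw [← hFeq]; exact hFface⟩
    -- F ⊆ U
    have hwU : w ∈ U := by
      apply Submodule.subset_span
      apply Set.mem_union_right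
      exact Set.mem_biUnion (show AreAdjacent C R₀ R from hadj)
        ⟨1, zero_le_one, (one_smul ℝ w).symm⟩
    have hFU : F ⊆ ↑U := by
      intro x hx
      obtain ⟨a, b, _, _, rfl⟩ := hkey x hx
      exact U.add_mem (U.smul_mem a hx₀U) (U.smul_mem b hwU)
    -- conclude
    intro r' hr'
    obtain ⟨cr, hcrC, rfl⟩ := hR'.1.2.1 hr'
    exact ⟨cr, hFU ⟨hcrC, hr'⟩, rfl⟩
  -- assemble
  have hge : Submodule.span ℝ C ≤ U := by
    rw [Submodule.span_le]
    intro x hxC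
    have h1 : π x ∈ ↑(Submodule.span ℝ
        (⋃ R' ∈ {R' : Set (V ⧸ L) | IsExtremalRayOf C' R'}, R')) := hMk ⟨x, hxC, rfl⟩
    have h2 : Submodule.span ℝ (⋃ R' ∈ {R' : Set (V ⧸ L) | IsExtremalRayOf C' R'}, R')
        ≤ U.map π := by
      rw [Submodule.span_le]
      intro r' hr'
      obtain ⟨R', hR', hrmem⟩ := Set.mem_iUnion₂.1 hr'
      exact hray R' hR' hrmem
    obtain ⟨u, hu, hue⟩ := h2 h1
    have hxu : x - u ∈ L := by
      apply (hker _).1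
      rw [map_sub, hue, sub_self]
    have : x = (x - u) + u := by abel
    rw [this]
    exact U.add_mem (hLU hxu) hu
  exact le_antisymm hle hge
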